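/- Let F be the free group on a, b and X = {a, ab, aba⁻¹, aba⁻¹b⁻¹, b, ba, bab⁻¹, bab⁻¹a⁻¹} the set of nonempty prefixes of [a,b] and of [b,a]. If a product p₁p₂⋯pₙ with each pᵢ ∈ X equals 1 in F, then every pᵢ is equal to aba⁻¹b⁻¹ or bab⁻¹a⁻¹. -/

import Mathlib

private lemma sum_zero_of_nonneg (l : List ℤ) (h : ∀ x ∈ l, 0 ≤ x) (hs : l.sum = 0) :
    ∀ x ∈ l, x = 0 := by
  induction l with
  | nil => simp
  | cons y t ih =>
    simp only [List.sum_cons] at hs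
    have hy := h y List.mem_cons_self
    have ht : ∀ x ∈ t, 0 ≤ x := fun x hx => h x (List.mem_cons_of_mem _ hx)
    have hts : 0 ≤ t.sum := List.sum_nonneg ht
    intro x hx
    rcases List.mem_cons.mp hx with rfl | hx
    · omega
    · exact ih ht (by omega) x hx

private lemma toAdd_prod_aux (l : List (Multiplicative ℤ)) :
    Multiplicative.toAdd l.prod = (l.map Multiplicative.toAdd).sum := by
  induction l with
  | nil => simp
  | cons y t ih => simp [ih]

theorem stmt_4 :
    let a : FreeGroup (Fin 2) := FreeGroup.of 0
    let b : FreeGroup (Fin 2) := FreeGroup.of 1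
    let X : Set (FreeGroup (Fin 2)) :=
      {a, a * b, a * b * a⁻¹, a * b * a⁻¹ * b⁻¹,
       b, b * a, b * a * b⁻¹, b * a * b⁻¹ * a⁻¹}
    ∀ l : List (FreeGroup (Fin 2)), (∀ p ∈ l, p ∈ X) → l.prod = 1 →
      ∀ p ∈ l, p = a * b * a⁻¹ * b⁻¹ ∨ p = b * a * b⁻¹ * a⁻¹ := by
  intro a b X l hX hprod
  set φ : FreeGroup (Fin 2) →* Multiplicative ℤ :=
    FreeGroup.lift (fun _ => Multiplicative.ofAdd 1) with hφ
  set f : FreeGroup (Fin 2) → ℤ := fun p => Multiplicative.toAdd (φ p) with hf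
  have hfa : f a = 1 := by simp [hf, hφ, a]
  have hfb : f b = 1 := by simp [hf, hφ, b]
  have hfmul : ∀ x y, f (x * y) = f x + f y := by
    intro x y; simp [hf, map_mul]
  have hfinv : ∀ x, f x⁻¹ = - f x := by
    intro x; simp [hf, map_inv]
  -- values on X
  have hval : ∀ p ∈ l, f p = 0 ∨ f p = 1 ∨ f p = 2 := by
    intro p hp
    rcases hX p hp with rfl | rfl | rfl | rfl | rfl | rfl | rfl | rfl <;>
      simp [hfmul, hfinv, hfa, hfb]
  have hsum : (l.map f).sum = 0 := by
    have : φ l.prod = (l.map φ).prod := map_list_prod φ l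
    rw [hprod, map_one] at this
    have h2 : Multiplicative.toAdd ((l.map φ).prod) = (l.map (fun p => Multiplicative.toAdd (φ p))).sum := by
      rw [toAdd_prod_aux, List.map_map]; rfl
    rw [← this] at h2
    simpa [hf] using h2.symm
  have hzero : ∀ p ∈ l, f p = 0 := by
    intro p hp
    have := sum_zero_of_nonneg (l.map f)
      (by intro x hx; rcases List.mem_map.mp hx with ⟨q, hq, rfl⟩
          rcases hval q hq with h | h | h <;> omega) hsum
    exact this (f p) (List.mem_map.mpr ⟨p, hp, rfl⟩)
  intro p hp
  have h0 := hzero p hp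
  rcases hX p hp with rfl | rfl | rfl | rfl | rfl | rfl | rfl | rfl <;>
    simp [hfmul, hfinv, hfa, hfb] at h0 ⊢ <;> omega
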